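/- arXiv:2105.04808 — 5 statements merged into one kernel-verified Lean document; each statement's English description precedes it below -/
import Mathlib

section
/- Let Δ > 0, σ > 0, ε ≥ 0 and δ ∈ [0,1] satisfy the analytic-Gaussian condition Φ(Δ/(2σ) − εσ/Δ) − e^ε·Φ(−Δ/(2σ) − εσ/Δ) ≤ δ. Then the one-dimensional Gaussian mechanism with noise scale σ is (ε,δ)-differentially private: for all a, b ∈ ℝ with |a − b| ≤ Δ and every measurable set S ⊆ ℝ, N(a, σ²)(S) ≤ e^ε · N(b, σ²)(S) + δ. -/
open MeasureTheory ProbabilityTheory Real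

/-- The cumulative distribution function of the standard normal distribution. -/
noncomputable def stdNormalCDF (x : ℝ) : ℝ :=
  ∫ t in Set.Iic x, (1 / Real.sqrt (2 * Real.pi)) * Real.exp (-(t ^ 2) / 2)

open scoped NNReal

section Helpers


lemma phi_eq : (fun t : ℝ => (1 / Real.sqrt (2 * Real.pi)) * Real.exp (-(t ^ 2) / 2))
    = gaussianPDFReal 0 1 := by
  funext t
  simp [gaussianPDFReal, one_div]

lemma stdNormalCDF_eq (x : ℝ) : stdNormalCDF x = ∫ t in Set.Iic x, gaussianPDFReal 0 1 t := by
  rw [stdNormalCDF, ← phi_eq]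

lemma integrable_phi : Integrable (gaussianPDFReal 0 1) := integrable_gaussianPDFReal 0 1

lemma integral_phi : ∫ t, gaussianPDFReal 0 1 t = 1 :=
  integral_gaussianPDFReal_eq_one 0 one_ne_zero

lemma phi_even (t : ℝ) : gaussianPDFReal 0 1 (-t) = gaussianPDFReal 0 1 t := by
  simp [gaussianPDFReal, neg_sq]

lemma stdNormalCDF_neg (x : ℝ) : stdNormalCDF (-x) = 1 - stdNormalCDF x := by
  rw [stdNormalCDF_eq, stdNormalCDF_eq]
  have h1 : ∫ t in Set.Iic (-x), gaussianPDFReal 0 1 t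
      = ∫ t in Set.Iic (-x), gaussianPDFReal 0 1 (-t) := by
    simp_rw [phi_even]
  rw [h1, integral_comp_neg_Iic, neg_neg]
  have h3 := MeasureTheory.integral_add_compl (measurableSet_Iic (a := x)) integrable_phi
  rw [Set.compl_Iic] at h3
  linarith [h3.trans integral_phi]

lemma continuous_phi : Continuous (gaussianPDFReal 0 1) := by
  unfold gaussianPDFReal
  fun_prop

lemma hasDerivAt_stdNormalCDF (x : ℝ) : HasDerivAt stdNormalCDF (gaussianPDFReal 0 1 x) x := by
  have h : stdNormalCDF = fun y => stdNormalCDF 0 + ∫ t in (0:ℝ)..y, gaussianPDFReal 0 1 t := by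
    funext y
    rw [stdNormalCDF_eq, stdNormalCDF_eq,
      ← intervalIntegral.integral_Iic_sub_Iic integrable_phi.integrableOn
        integrable_phi.integrableOn]
    ring
  rw [h]
  exact (intervalIntegral.integral_hasDerivAt_right integrable_phi.intervalIntegrable
    ((stronglyMeasurable_gaussianPDFReal 0 1).aestronglyMeasurable.stronglyMeasurableAtFilter)
    (continuous_phi.continuousAt)).const_add _

lemma var_ne_zero (hσ : 0 < σ) : (⟨σ ^ 2, sq_nonneg σ⟩ : ℝ≥0) ≠ 0 := by
  intro h
  have h2 : σ ^ 2 = 0 := congrArg Subtype.val h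
  nlinarith

lemma gauss_map (hσ : 0 < σ) (m : ℝ) :
    gaussianReal m ⟨σ ^ 2, sq_nonneg σ⟩ = (gaussianReal 0 1).map (fun x => σ * x + m) := by
  have h1 : (gaussianReal 0 1).map (fun x => σ * x) = gaussianReal 0 (NNReal.mk (σ ^ 2) (sq_nonneg σ)) := by
    rw [show (fun x : ℝ => σ * x) = (σ * ·) from rfl, gaussianReal_map_const_mul]
    norm_num
  have h2 : (fun x : ℝ => σ * x + m) = ((· + m) ∘ fun x => σ * x) := rfl
  rw [h2, ← Measure.map_map (g := (· + m)) (f := fun x => σ * x) (by fun_prop) (by fun_prop), h1,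
    gaussianReal_map_add_const, zero_add]
  rfl

lemma gauss_Iic (hσ : 0 < σ) (m t : ℝ) :
    ∫ x in Set.Iic t, gaussianPDFReal m (⟨σ ^ 2, sq_nonneg σ⟩ : ℝ≥0) x
      = stdNormalCDF ((t - m) / σ) := by
  have hv := var_ne_zero hσ
  have hpre : (fun x => σ * x + m) ⁻¹' (Set.Iic t) = Set.Iic ((t - m) / σ) := by
    ext x
    simp only [Set.mem_preimage, Set.mem_Iic, le_div_iff₀ hσ]
    constructor <;> intro h <;> nlinarith
  have h1 : gaussianReal m (⟨σ ^ 2, sq_nonneg σ⟩ : ℝ≥0) (Set.Iic t)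
      = gaussianReal 0 1 (Set.Iic ((t - m) / σ)) := by
    rw [gauss_map hσ, Measure.map_apply (by fun_prop) measurableSet_Iic, hpre]
  rw [gaussianReal_apply_eq_integral _ hv, gaussianReal_apply_eq_integral _ one_ne_zero] at h1
  rw [stdNormalCDF_eq]
  exact (ENNReal.ofReal_eq_ofReal_iff
    (setIntegral_nonneg measurableSet_Iic fun x _ => gaussianPDFReal_nonneg _ _ _)
    (setIntegral_nonneg measurableSet_Iic fun x _ => gaussianPDFReal_nonneg _ _ _)).mp h1

lemma gauss_Ioi (hσ : 0 < σ) (m t : ℝ) :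
    ∫ x in Set.Ioi t, gaussianPDFReal m (⟨σ ^ 2, sq_nonneg σ⟩ : ℝ≥0) x
      = stdNormalCDF ((m - t) / σ) := by
  have hv := var_ne_zero hσ
  have h3 := MeasureTheory.integral_add_compl (measurableSet_Iic (a := t))
    (integrable_gaussianPDFReal m (⟨σ ^ 2, sq_nonneg σ⟩ : ℝ≥0))
  rw [Set.compl_Iic] at h3
  have h4 := h3.trans (integral_gaussianPDFReal_eq_one m hv)
  have h5 : (m - t) / σ = -((t - m) / σ) := by ring
  rw [h5, stdNormalCDF_neg, ← gauss_Iic hσ m t]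
  linarith

lemma F_mono {σ ε : ℝ} (hσ : 0 < σ) {c d : ℝ} (hc : 0 < c) (hcd : c ≤ d) :
    stdNormalCDF (c / (2 * σ) - ε * σ / c) - rexp ε * stdNormalCDF (-(c / (2 * σ)) - ε * σ / c)
      ≤ stdNormalCDF (d / (2 * σ) - ε * σ / d)
        - rexp ε * stdNormalCDF (-(d / (2 * σ)) - ε * σ / d) := by
  set F : ℝ → ℝ := fun x =>
    stdNormalCDF (x / (2 * σ) - ε * σ / x) - rexp ε * stdNormalCDF (-(x / (2 * σ)) - ε * σ / x)
    with hF_def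
  have hF : ∀ x ∈ Set.Ioi (0:ℝ),
      HasDerivAt F (gaussianPDFReal 0 1 (x / (2 * σ) - ε * σ / x) / σ) x := by
    intro x hx
    have hx0 : x ≠ 0 := ne_of_gt hx
    have h1 : HasDerivAt (fun y : ℝ => y / (2 * σ)) (1 / (2 * σ)) x := by
      simpa using (hasDerivAt_id x).div_const (2 * σ)
    have h2 : HasDerivAt (fun y : ℝ => ε * σ / y) (ε * σ * -(x ^ 2)⁻¹) x := by
      simp_rw [div_eq_mul_inv]
      exact (hasDerivAt_inv hx0).const_mul (ε * σ)
    have hu : HasDerivAt (fun y : ℝ => y / (2 * σ) - ε * σ / y)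
        (1 / (2 * σ) - ε * σ * -(x ^ 2)⁻¹) x := h1.sub h2
    have hv : HasDerivAt (fun y : ℝ => -(y / (2 * σ)) - ε * σ / y)
        (-(1 / (2 * σ)) - ε * σ * -(x ^ 2)⁻¹) x := h1.neg.sub h2
    have h := ((hasDerivAt_stdNormalCDF _).comp x hu).sub
      (((hasDerivAt_stdNormalCDF _).comp x hv).const_mul (rexp ε))
    have key : rexp ε * gaussianPDFReal 0 1 (-(x / (2 * σ)) - ε * σ / x)
        = gaussianPDFReal 0 1 (x / (2 * σ) - ε * σ / x) := by
      simp only [gaussianPDFReal]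
      rw [mul_comm (rexp ε), mul_assoc, ← Real.exp_add]
      congr 1
      have hσ0 : σ ≠ 0 := ne_of_gt hσ
      push_cast
      field_simp
      ring
    refine h.congr_deriv (Eq.symm ?_)
    linear_combination (-(1 / (2 * σ)) - ε * (σ * -(x ^ 2)⁻¹)) * key
  have hmono : MonotoneOn F (Set.Ioi (0:ℝ)) := by
    apply monotoneOn_of_deriv_nonneg (convex_Ioi 0)
    · exact fun x hx => (hF x hx).continuousAt.continuousWithinAt
    · rw [interior_Ioi]
      exact fun x hx => (hF x hx).differentiableAt.differentiableWithinAt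
    · rw [interior_Ioi]
      intro x hx
      rw [(hF x hx).deriv]
      exact div_nonneg (gaussianPDFReal_nonneg _ _ _) hσ.le
  exact hmono hc (lt_of_lt_of_le hc hcd) hcd

lemma density_exp {σ : ℝ} (ε m x : ℝ) :
    rexp ε * gaussianPDFReal m (⟨σ ^ 2, sq_nonneg σ⟩ : ℝ≥0) x
      = (Real.sqrt (2 * π * σ ^ 2))⁻¹ * rexp (ε + -(x - m) ^ 2 / (2 * σ ^ 2)) := by
  simp only [gaussianPDFReal, NNReal.toReal, Real.exp_add]
  ring

lemma density_cmp {σ ε : ℝ} (hσ : 0 < σ) (a b x : ℝ) :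
    gaussianPDFReal a (⟨σ ^ 2, sq_nonneg σ⟩ : ℝ≥0) x
        ≤ rexp ε * gaussianPDFReal b (⟨σ ^ 2, sq_nonneg σ⟩ : ℝ≥0) x
      ↔ -(x - a) ^ 2 / (2 * σ ^ 2) ≤ ε + -(x - b) ^ 2 / (2 * σ ^ 2) := by
  rw [density_exp]
  simp only [gaussianPDFReal, NNReal.toReal]
  rw [mul_le_mul_iff_right₀ (by positivity), Real.exp_le_exp]

lemma density_cmp' {σ ε : ℝ} (hσ : 0 < σ) (a b x : ℝ) :
    rexp ε * gaussianPDFReal b (⟨σ ^ 2, sq_nonneg σ⟩ : ℝ≥0) x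
        ≤ gaussianPDFReal a (⟨σ ^ 2, sq_nonneg σ⟩ : ℝ≥0) x
      ↔ ε + -(x - b) ^ 2 / (2 * σ ^ 2) ≤ -(x - a) ^ 2 / (2 * σ ^ 2) := by
  rw [density_exp]
  simp only [gaussianPDFReal, NNReal.toReal]
  rw [mul_le_mul_iff_right₀ (by positivity), Real.exp_le_exp]

lemma main_core {σ ε : ℝ} (hσ : 0 < σ) (a b : ℝ) (hab : 0 < a - b)
    (S : Set ℝ) (hS : MeasurableSet S) :
    ∫ x in S, gaussianPDFReal a (⟨σ ^ 2, sq_nonneg σ⟩ : ℝ≥0) x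
      ≤ rexp ε * (∫ x in S, gaussianPDFReal b (⟨σ ^ 2, sq_nonneg σ⟩ : ℝ≥0) x)
      + (stdNormalCDF ((a - b) / (2 * σ) - ε * σ / (a - b))
          - rexp ε * stdNormalCDF (-((a - b) / (2 * σ)) - ε * σ / (a - b))) := by
  have hσ0 : σ ≠ 0 := ne_of_gt hσ
  have hc0 : a - b ≠ 0 := ne_of_gt hab
  set v : ℝ≥0 := ⟨σ ^ 2, sq_nonneg σ⟩ with hv
  set t : ℝ := (a + b) / 2 + ε * σ ^ 2 / (a - b) with ht_def
  set pa := gaussianPDFReal a v with hpa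
  set pb := gaussianPDFReal b v with hpb
  have htkey : (a - b) * (2 * t - a - b) = 2 * ε * σ ^ 2 := by
    rw [ht_def]
    field_simp
    ring
  have hIa : ∀ T : Set ℝ, IntegrableOn pa T := fun T =>
    (integrable_gaussianPDFReal a v).integrableOn
  have hIb : ∀ T : Set ℝ, IntegrableOn (fun x => rexp ε * pb x) T := fun T =>
    ((integrable_gaussianPDFReal b v).const_mul (rexp ε)).integrableOn
  -- pointwise comparisons
  have hle : ∀ x : ℝ, x ≤ t → pa x ≤ rexp ε * pb x := by
    intro x hx
    rw [hpa, hpb, density_cmp hσ, ← sub_nonneg]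
    have h1 : ε + -(x - b) ^ 2 / (2 * σ ^ 2) - -(x - a) ^ 2 / (2 * σ ^ 2)
        = (2 * ε * σ ^ 2 - (a - b) * (2 * x - a - b)) / (2 * σ ^ 2) := by
      field_simp
      ring
    rw [h1]
    apply div_nonneg _ (by positivity)
    nlinarith [mul_nonneg hab.le (sub_nonneg.mpr hx)]
  have hge : ∀ x : ℝ, t ≤ x → rexp ε * pb x ≤ pa x := by
    intro x hx
    rw [hpa, hpb, density_cmp' hσ, ← sub_nonneg]
    have h1 : -(x - a) ^ 2 / (2 * σ ^ 2) - (ε + -(x - b) ^ 2 / (2 * σ ^ 2))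
        = ((a - b) * (2 * x - a - b) - 2 * ε * σ ^ 2) / (2 * σ ^ 2) := by
      field_simp
      ring
    rw [h1]
    apply div_nonneg _ (by positivity)
    nlinarith [mul_nonneg hab.le (sub_nonneg.mpr hx)]
  -- splitting
  have hsplit : (∫ x in S ∩ Set.Ioi t, pa x) + ∫ x in S \ Set.Ioi t, pa x = ∫ x in S, pa x :=
    integral_inter_add_diff measurableSet_Ioi (hIa S)
  have hsplitb : (∫ x in S ∩ Set.Ioi t, rexp ε * pb x) + ∫ x in S \ Set.Ioi t, rexp ε * pb x
      = ∫ x in S, rexp ε * pb x :=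
    integral_inter_add_diff measurableSet_Ioi (hIb S)
  have bound1 : ∫ x in S \ Set.Ioi t, pa x ≤ ∫ x in S \ Set.Ioi t, rexp ε * pb x := by
    apply setIntegral_mono_on (hIa _) (hIb _) (hS.diff measurableSet_Ioi)
    intro x hx
    exact hle x (le_of_not_gt hx.2)
  have hsub : IntegrableOn (fun x => pa x - rexp ε * pb x) (Set.Ioi t) :=
    (hIa _).sub (hIb _)
  have bound2 : (∫ x in S ∩ Set.Ioi t, (pa x - rexp ε * pb x))
      ≤ ∫ x in Set.Ioi t, (pa x - rexp ε * pb x) := by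
    apply setIntegral_mono_set hsub
    · filter_upwards [ae_restrict_mem measurableSet_Ioi] with x hx
      exact sub_nonneg.mpr (hge x hx.le)
    · exact HasSubset.Subset.eventuallyLE Set.inter_subset_right
  have e1 : (∫ x in S ∩ Set.Ioi t, (pa x - rexp ε * pb x))
      = (∫ x in S ∩ Set.Ioi t, pa x) - ∫ x in S ∩ Set.Ioi t, rexp ε * pb x :=
    integral_sub (hIa _) (hIb _)
  have e2 : (∫ x in Set.Ioi t, (pa x - rexp ε * pb x))
      = (∫ x in Set.Ioi t, pa x) - ∫ x in Set.Ioi t, rexp ε * pb x :=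
    integral_sub (hIa _) (hIb _)
  have e3 : (∫ x in Set.Ioi t, pa x) = stdNormalCDF ((a - t) / σ) := gauss_Ioi hσ a t
  have e4 : (∫ x in Set.Ioi t, rexp ε * pb x) = rexp ε * stdNormalCDF ((b - t) / σ) := by
    rw [integral_const_mul, hpb, gauss_Ioi hσ b t]
  have e5 : (∫ x in S, rexp ε * pb x) = rexp ε * ∫ x in S, pb x := integral_const_mul _ _
  have e6 : (a - t) / σ = (a - b) / (2 * σ) - ε * σ / (a - b) := by
    rw [ht_def]
    field_simp
    ring
  have e7 : (b - t) / σ = -((a - b) / (2 * σ)) - ε * σ / (a - b) := by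
    rw [ht_def]
    field_simp
    ring
  rw [e1, e2] at bound2
  have final : (∫ x in S, pa x) ≤ rexp ε * (∫ x in S, pb x)
      + ((∫ x in Set.Ioi t, pa x) - ∫ x in Set.Ioi t, rexp ε * pb x) := by
    linarith
  rw [e3, e4, e6, e7] at final
  exact final

lemma neg_pdf {σ : ℝ} (m y : ℝ) :
    gaussianPDFReal m (⟨σ ^ 2, sq_nonneg σ⟩ : ℝ≥0) (-y)
      = gaussianPDFReal (-m) (⟨σ ^ 2, sq_nonneg σ⟩ : ℝ≥0) y := by
  simp only [gaussianPDFReal]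
  have h : (-y - m) ^ 2 = (y - -m) ^ 2 := by ring
  rw [h]

lemma integral_neg_set {σ : ℝ} (m : ℝ) (S : Set ℝ) :
    ∫ x in S, gaussianPDFReal m (⟨σ ^ 2, sq_nonneg σ⟩ : ℝ≥0) x
      = ∫ x in (Neg.neg ⁻¹' S), gaussianPDFReal (-m) (⟨σ ^ 2, sq_nonneg σ⟩ : ℝ≥0) x := by
  rw [← MeasurePreserving.setIntegral_preimage_emb (Measure.measurePreserving_neg volume)
    measurableEmbedding_neg (gaussianPDFReal m (⟨σ ^ 2, sq_nonneg σ⟩ : ℝ≥0)) S]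
  simp_rw [neg_pdf]

lemma main_real (Δ σ ε δ : ℝ) (hΔ : 0 < Δ) (hσ : 0 < σ) (hε : 0 ≤ ε)
    (hδ0 : 0 ≤ δ)
    (hAG : stdNormalCDF (Δ / (2 * σ) - ε * σ / Δ)
        - Real.exp ε * stdNormalCDF (-(Δ / (2 * σ)) - ε * σ / Δ) ≤ δ)
    (a b : ℝ) (hab : |a - b| ≤ Δ) (S : Set ℝ) (hS : MeasurableSet S) :
    ∫ x in S, gaussianPDFReal a (⟨σ ^ 2, sq_nonneg σ⟩ : ℝ≥0) x
      ≤ rexp ε * (∫ x in S, gaussianPDFReal b (⟨σ ^ 2, sq_nonneg σ⟩ : ℝ≥0) x) + δ := by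
  have key : ∀ a' b' : ℝ, 0 < a' - b' → a' - b' ≤ Δ → ∀ T : Set ℝ, MeasurableSet T →
      ∫ x in T, gaussianPDFReal a' (⟨σ ^ 2, sq_nonneg σ⟩ : ℝ≥0) x
        ≤ rexp ε * (∫ x in T, gaussianPDFReal b' (⟨σ ^ 2, sq_nonneg σ⟩ : ℝ≥0) x) + δ := by
    intro a' b' h1 h2 T hT
    calc ∫ x in T, gaussianPDFReal a' (⟨σ ^ 2, sq_nonneg σ⟩ : ℝ≥0) x
        ≤ rexp ε * (∫ x in T, gaussianPDFReal b' (⟨σ ^ 2, sq_nonneg σ⟩ : ℝ≥0) x)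
          + (stdNormalCDF ((a' - b') / (2 * σ) - ε * σ / (a' - b'))
            - rexp ε * stdNormalCDF (-((a' - b') / (2 * σ)) - ε * σ / (a' - b'))) :=
          main_core hσ a' b' h1 T hT
      _ ≤ rexp ε * (∫ x in T, gaussianPDFReal b' (⟨σ ^ 2, sq_nonneg σ⟩ : ℝ≥0) x) + δ := by
          have := F_mono (ε := ε) hσ h1 h2
          linarith
  rcases lt_trichotomy (a - b) 0 with h | h | h
  · rw [integral_neg_set a S, integral_neg_set b S]
    exact key (-a) (-b) (by linarith) (by rw [abs_le] at hab; linarith)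
      _ (hS.preimage measurable_neg)
  · have hab' : a = b := by linarith
    subst hab'
    have h0 : 0 ≤ ∫ x in S, gaussianPDFReal a (⟨σ ^ 2, sq_nonneg σ⟩ : ℝ≥0) x :=
      setIntegral_nonneg hS fun x _ => gaussianPDFReal_nonneg _ _ _
    nlinarith [Real.one_le_exp hε]
  · exact key a b h (by rw [abs_le] at hab; linarith) S hS
end Helpers

/-- If the analytic-Gaussian condition holds, then the one-dimensional Gaussian mechanism
with noise scale `σ` is `(ε, δ)`-differentially private on pairs at distance at most `Δ`. -/
theorem analytic_gaussian_mechanism_dp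
    (Δ σ ε δ : ℝ) (hΔ : 0 < Δ) (hσ : 0 < σ) (hε : 0 ≤ ε) (hδ : δ ∈ Set.Icc (0 : ℝ) 1)
    (hAG : stdNormalCDF (Δ / (2 * σ) - ε * σ / Δ)
        - Real.exp ε * stdNormalCDF (-(Δ / (2 * σ)) - ε * σ / Δ) ≤ δ) :
    ∀ a b : ℝ, |a - b| ≤ Δ → ∀ S : Set ℝ, MeasurableSet S →
      gaussianReal a ⟨σ ^ 2, sq_nonneg σ⟩ S ≤
        ENNReal.ofReal (Real.exp ε) * gaussianReal b ⟨σ ^ 2, sq_nonneg σ⟩ S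
          + ENNReal.ofReal δ := by
  intro a b hab S hS
  have hv := var_ne_zero hσ
  rw [gaussianReal_apply_eq_integral a hv S, gaussianReal_apply_eq_integral b hv S]
  have hIb0 : 0 ≤ ∫ x in S, gaussianPDFReal b (⟨σ ^ 2, sq_nonneg σ⟩ : ℝ≥0) x :=
    setIntegral_nonneg hS fun x _ => gaussianPDFReal_nonneg _ _ _
  rw [← ENNReal.ofReal_mul (exp_nonneg ε),
    ← ENNReal.ofReal_add (mul_nonneg (exp_nonneg ε) hIb0) hδ.1]
  exact ENNReal.ofReal_le_ofReal
    (main_real Δ σ ε δ hΔ hσ hε hδ.1 hAG a b hab S hS)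
end

section
/- Let Δ > 0, σ > 0, ε ≥ 0 and δ ∈ [0,1]. If for all a, b ∈ ℝ with |a − b| ≤ Δ and every measurable set S ⊆ ℝ one has N(a, σ²)(S) ≤ e^ε · N(b, σ²)(S) + δ, then the analytic-Gaussian condition holds: Φ(Δ/(2σ) − εσ/Δ) − e^ε·Φ(−Δ/(2σ) − εσ/Δ) ≤ δ. -/
open MeasureTheory ProbabilityTheory Real

lemma stdNormalCDF_nonneg (x : ℝ) : 0 ≤ stdNormalCDF x := by
  refine setIntegral_nonneg measurableSet_Iic fun t _ => ?_
  positivity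

lemma gauss01_Iic (x : ℝ) :
    gaussianReal 0 1 (Set.Iic x) = ENNReal.ofReal (stdNormalCDF x) := by
  rw [gaussianReal_apply_eq_integral 0 one_ne_zero, stdNormalCDF]
  congr 1
  refine setIntegral_congr_fun measurableSet_Iic fun t _ => ?_
  simp [gaussianPDFReal, one_div]

lemma gauss01_Ici (x : ℝ) :
    gaussianReal 0 1 (Set.Ici x) = ENNReal.ofReal (stdNormalCDF (-x)) := by
  have hneg : (gaussianReal 0 1).map (fun y : ℝ => -1 * y) = gaussianReal 0 1 := by
    rw [show (fun y : ℝ => -1 * y) = ((-1 : ℝ) * ·) from rfl, gaussianReal_map_const_mul (-1)]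
    norm_num
  conv_lhs => rw [← hneg]
  rw [Measure.map_apply (by fun_prop) measurableSet_Ici]
  have : (fun y : ℝ => -1 * y) ⁻¹' Set.Ici x = Set.Iic (-x) := by
    ext y
    simp only [Set.mem_preimage, Set.mem_Ici, Set.mem_Iic, neg_one_mul]
    constructor <;> intro h <;> linarith
  rw [this, gauss01_Iic]

lemma gauss_Ici (μ σ t : ℝ) (hσ : 0 < σ) :
    gaussianReal μ ⟨σ ^ 2, sq_nonneg σ⟩ (Set.Ici t)
      = ENNReal.ofReal (stdNormalCDF ((μ - t) / σ)) := by
  have hmap : (gaussianReal 0 1).map (fun x : ℝ => σ * x + μ)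
      = gaussianReal μ ⟨σ ^ 2, sq_nonneg σ⟩ := by
    rw [show (fun x : ℝ => σ * x + μ) = (· + μ) ∘ (σ * ·) from rfl,
      ← Measure.map_map (measurable_add_const μ) (by fun_prop),
      gaussianReal_map_const_mul σ, gaussianReal_map_add_const μ]
    norm_num
    rfl
  rw [← hmap, Measure.map_apply (by fun_prop) measurableSet_Ici]
  have : (fun x : ℝ => σ * x + μ) ⁻¹' Set.Ici t = Set.Ici ((t - μ) / σ) := by
    ext x
    simp only [Set.mem_preimage, Set.mem_Ici, div_le_iff₀ hσ]
    constructor <;> intro h <;> nlinarith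
  rw [this, gauss01_Ici]
  congr 2
  field_simp
  ring

/-- If the one-dimensional Gaussian mechanism with noise scale `σ` is `(ε, δ)`-differentially
private on pairs at distance at most `Δ`, then the analytic-Gaussian condition holds. -/
theorem dp_implies_analytic_gaussian_condition
    (Δ σ ε δ : ℝ) (hΔ : 0 < Δ) (hσ : 0 < σ) (hε : 0 ≤ ε) (hδ : δ ∈ Set.Icc (0 : ℝ) 1)
    (hDP : ∀ a b : ℝ, |a - b| ≤ Δ → ∀ S : Set ℝ, MeasurableSet S →
      gaussianReal a ⟨σ ^ 2, sq_nonneg σ⟩ S ≤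
        ENNReal.ofReal (Real.exp ε) * gaussianReal b ⟨σ ^ 2, sq_nonneg σ⟩ S
          + ENNReal.ofReal δ) :
    stdNormalCDF (Δ / (2 * σ) - ε * σ / Δ)
      - Real.exp ε * stdNormalCDF (-(Δ / (2 * σ)) - ε * σ / Δ) ≤ δ := by
  set t : ℝ := Δ / 2 + ε * σ ^ 2 / Δ with ht
  have h := hDP Δ 0 (by rw [sub_zero, abs_of_pos hΔ]) (Set.Ici t) measurableSet_Ici
  rw [gauss_Ici Δ σ t hσ, gauss_Ici 0 σ t hσ] at h
  have hA : (Δ - t) / σ = Δ / (2 * σ) - ε * σ / Δ := by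
    rw [ht]; field_simp; ring
  have hB : (0 - t) / σ = -(Δ / (2 * σ)) - ε * σ / Δ := by
    rw [ht]; field_simp; ring
  rw [hA, hB] at h
  set A := stdNormalCDF (Δ / (2 * σ) - ε * σ / Δ)
  set B := stdNormalCDF (-(Δ / (2 * σ)) - ε * σ / Δ)
  have hBnn : 0 ≤ B := stdNormalCDF_nonneg _
  have hrhs : ENNReal.ofReal (Real.exp ε) * ENNReal.ofReal B + ENNReal.ofReal δ
      = ENNReal.ofReal (Real.exp ε * B + δ) := by
    rw [← ENNReal.ofReal_mul (Real.exp_nonneg ε), ← ENNReal.ofReal_add (mul_nonneg (Real.exp_nonneg ε) hBnn) hδ.1]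
  rw [hrhs] at h
  have := (ENNReal.ofReal_le_ofReal_iff (add_nonneg (mul_nonneg (Real.exp_nonneg ε) hBnn) hδ.1)).mp h
  linarith
end

section
/- Let Δ > 0, σ > 0 and ε ≥ 0. For every measurable set S ⊆ ℝ, N(Δ, σ²)(S) − e^ε · N(0, σ²)(S) ≤ Φ(Δ/(2σ) − εσ/Δ) − e^ε·Φ(−Δ/(2σ) − εσ/Δ). -/
open MeasureTheory ProbabilityTheory Real

/-- The upper tail of a Gaussian measure equals the standard normal CDF at `(m - c) / s`. -/
lemma gauss_Ioi_toReal (m s c : ℝ) (hs : 0 < s) :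
    (gaussianReal m ⟨s ^ 2, sq_nonneg s⟩ (Set.Ioi c)).toReal = stdNormalCDF ((m - c) / s) := by
  have hv : (⟨s ^ 2, sq_nonneg s⟩ : NNReal) ≠ 0 := by
    intro h
    exact pow_ne_zero 2 hs.ne' (by simpa [← NNReal.coe_inj] using h)
  have h1 : gaussianReal m ⟨s ^ 2, sq_nonneg s⟩ = (gaussianReal 0 1).map (fun x => s * x + m) := by
    rw [show (fun x : ℝ => s * x + m) = (· + m) ∘ (s * ·) from rfl,
      ← Measure.map_map (measurable_add_const m) (measurable_const_mul s),
      gaussianReal_map_const_mul, gaussianReal_map_add_const]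
    norm_num
    rfl
  rw [h1, Measure.map_apply (by fun_prop) measurableSet_Ioi]
  have hpre : (fun x => s * x + m) ⁻¹' Set.Ioi c = Set.Ioi ((c - m) / s) := by
    ext x
    simp only [Set.mem_preimage, Set.mem_Ioi]
    rw [div_lt_iff₀ hs]
    constructor <;> intro h <;> nlinarith
  rw [hpre, gaussianReal_apply_eq_integral 0 one_ne_zero,
    ENNReal.toReal_ofReal (setIntegral_nonneg measurableSet_Ioi
      fun x _ => gaussianPDFReal_nonneg _ _ _)]
  have hpdf : ∀ x : ℝ, gaussianPDFReal 0 1 x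
      = (fun t : ℝ => 1 / Real.sqrt (2 * Real.pi) * Real.exp (-(t ^ 2) / 2)) (-x) := by
    intro x
    simp [gaussianPDFReal, one_div]
  calc ∫ x in Set.Ioi ((c - m) / s), gaussianPDFReal 0 1 x
      = ∫ x in Set.Ioi ((c - m) / s),
          (fun t : ℝ => 1 / Real.sqrt (2 * Real.pi) * Real.exp (-(t ^ 2) / 2)) (-x) :=
        setIntegral_congr_fun measurableSet_Ioi fun x _ => hpdf x
    _ = ∫ t in Set.Iic (-((c - m) / s)),
          1 / Real.sqrt (2 * Real.pi) * Real.exp (-(t ^ 2) / 2) :=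
        integral_comp_neg_Ioi ((c - m) / s) (fun t : ℝ => 1 / Real.sqrt (2 * Real.pi) * Real.exp (-(t ^ 2) / 2))
    _ = stdNormalCDF ((m - c) / s) := by rw [show -((c - m) / s) = (m - c) / s by ring]; rfl

/-- For every measurable set `S`, the privacy-loss quantity of the Gaussian mechanism is at
most the analytic-Gaussian expression. -/
theorem gaussian_privacy_loss_le
    (Δ σ ε : ℝ) (hΔ : 0 < Δ) (hσ : 0 < σ) (hε : 0 ≤ ε) :
    ∀ S : Set ℝ, MeasurableSet S →
      (gaussianReal Δ ⟨σ ^ 2, sq_nonneg σ⟩ S).toReal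
          - Real.exp ε * (gaussianReal 0 ⟨σ ^ 2, sq_nonneg σ⟩ S).toReal
        ≤ stdNormalCDF (Δ / (2 * σ) - ε * σ / Δ)
            - Real.exp ε * stdNormalCDF (-(Δ / (2 * σ)) - ε * σ / Δ) := by
  intro S hS
  set v : NNReal := ⟨σ ^ 2, sq_nonneg σ⟩ with hv_def
  have hv : v ≠ 0 := by
    intro h
    exact pow_ne_zero 2 hσ.ne' (by have h' := congrArg NNReal.toReal h; exact h')
  have hvc : (v : ℝ) = σ ^ 2 := rfl
  set c : ℝ := ε * σ ^ 2 / Δ + Δ / 2 with hc_def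
  set f : ℝ → ℝ := gaussianPDFReal Δ v with hf_def
  set g : ℝ → ℝ := gaussianPDFReal 0 v with hg_def
  -- measures as integrals
  have hmeas : ∀ (m : ℝ) (T : Set ℝ), MeasurableSet T →
      (gaussianReal m v T).toReal = ∫ x in T, gaussianPDFReal m v x := by
    intro m T _
    rw [gaussianReal_apply_eq_integral m hv, ENNReal.toReal_ofReal]
    exact setIntegral_nonneg ‹_› fun x _ => gaussianPDFReal_nonneg _ _ _
  -- integrability
  have hf_int : Integrable f := integrable_gaussianPDFReal _ _
  have hg_int : Integrable g := integrable_gaussianPDFReal _ _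
  have hh_int : Integrable (fun x => f x - Real.exp ε * g x) :=
    hf_int.sub (hg_int.const_mul _)
  -- sign of the difference
  have key : ∀ x : ℝ, f x ≤ Real.exp ε * g x ↔ x ≤ c := by
    intro x
    have hK : 0 < (Real.sqrt (2 * π * σ ^ 2))⁻¹ := by positivity
    have h1 : f x = (Real.sqrt (2 * π * σ ^ 2))⁻¹ *
        Real.exp (-(x - Δ) ^ 2 / (2 * σ ^ 2)) := by
      rw [hf_def, gaussianPDFReal, hvc]
    have h2 : Real.exp ε * g x = (Real.sqrt (2 * π * σ ^ 2))⁻¹ *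
        Real.exp (ε + -(x - 0) ^ 2 / (2 * σ ^ 2)) := by
      rw [hg_def, gaussianPDFReal, hvc, Real.exp_add]
      ring
    rw [h1, h2, mul_le_mul_iff_right₀ hK, Real.exp_le_exp]
    have h3 : -(x - Δ) ^ 2 / (2 * σ ^ 2) - -(x - 0) ^ 2 / (2 * σ ^ 2)
        = (x - Δ / 2) * Δ / σ ^ 2 := by
      field_simp
      ring
    rw [← sub_le_iff_le_add, h3, div_le_iff₀ (by positivity : (0:ℝ) < σ ^ 2), hc_def]
    rw [← sub_le_iff_le_add, ← le_div_iff₀ hΔ]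
  -- rewrite LHS as a single integral
  rw [hmeas Δ S hS, hmeas 0 S hS, ← hf_def, ← hg_def,
    ← MeasureTheory.integral_const_mul, ← MeasureTheory.integral_sub hf_int.integrableOn
      ((hg_int.const_mul _).integrableOn)]
  -- bound by integral over Ioi c
  have step1 : ∫ x in S, (f x - Real.exp ε * g x)
      ≤ ∫ x in Set.Ioi c, (f x - Real.exp ε * g x) := by
    have hsplit := MeasureTheory.integral_inter_add_diff (μ := volume) (s := S)
      (t := Set.Ioi c) measurableSet_Ioi hh_int.integrableOn
    have hneg : ∫ x in S \ Set.Ioi c, (f x - Real.exp ε * g x) ≤ 0 := by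
      apply setIntegral_nonpos (hS.diff measurableSet_Ioi)
      intro x hx
      have hxc : x ≤ c := not_lt.mp hx.2
      exact sub_nonpos.mpr ((key x).mpr hxc)
    have h2 : ∫ x in S ∩ Set.Ioi c, (f x - Real.exp ε * g x)
        ≤ ∫ x in Set.Ioi c, (f x - Real.exp ε * g x) := by
      apply setIntegral_mono_set hh_int.integrableOn
      · exact (ae_restrict_iff' measurableSet_Ioi).mpr (ae_of_all _ fun x hx =>
          sub_nonneg.mpr (le_of_not_ge fun hle => not_lt.mpr ((key x).mp hle) hx))
      · exact HasSubset.Subset.eventuallyLE Set.inter_subset_right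
    linarith
  refine le_trans step1 ?_
  -- compute the right-hand side
  rw [MeasureTheory.integral_sub hf_int.integrableOn ((hg_int.const_mul _).integrableOn),
    MeasureTheory.integral_const_mul, ← hmeas Δ _ measurableSet_Ioi,
    ← hmeas 0 _ measurableSet_Ioi]
  have hA : ((gaussianReal Δ v) (Set.Ioi c)).toReal = stdNormalCDF ((Δ - c) / σ) :=
    gauss_Ioi_toReal Δ σ c hσ
  have hB : ((gaussianReal 0 v) (Set.Ioi c)).toReal = stdNormalCDF ((0 - c) / σ) :=
    gauss_Ioi_toReal 0 σ c hσ
  rw [hA, hB]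
  have e1 : (Δ - c) / σ = Δ / (2 * σ) - ε * σ / Δ := by
    rw [hc_def]; field_simp; ring
  have e2 : (0 - c) / σ = -(Δ / (2 * σ)) - ε * σ / Δ := by
    rw [hc_def]; field_simp; ring
  rw [e1, e2]
end

section
/- Let Δ > 0, σ > 0, ε ≥ 0 and δ ∈ (0,1) satisfy the analytic-Gaussian condition Φ(Δ/(2σ) − εσ/Δ) − e^ε·Φ(−Δ/(2σ) − εσ/Δ) ≤ δ. Then for all a, b ∈ ℝ with |a − b| ≤ Δ, the probability that dpsign outputs −1 satisfies 1 − Φ(a/σ) ≤ e^ε · (1 − Φ(b/σ)) + δ. -/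
open Real

namespace DpsignAux

noncomputable def gauss (t : ℝ) : ℝ := (1 / Real.sqrt (2 * Real.pi)) * Real.exp (-(t ^ 2) / 2)

lemma gauss_nonneg (t : ℝ) : 0 ≤ gauss t := by
  unfold gauss
  positivity

lemma gauss_integrable : MeasureTheory.Integrable gauss := by
  have h : MeasureTheory.Integrable (fun t : ℝ => Real.exp (-(1/2 : ℝ) * t ^ 2)) :=
    integrable_exp_neg_mul_sq (by norm_num)
  have := h.const_mul (1 / Real.sqrt (2 * Real.pi))
  refine this.congr ?_
  filter_upwards with t
  unfold gauss
  ring_nf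

lemma gauss_total : ∫ t : ℝ, gauss t = 1 := by
  unfold gauss
  rw [MeasureTheory.integral_const_mul]
  have h : ∀ t : ℝ, Real.exp (-(t ^ 2) / 2) = Real.exp (-(1/2 : ℝ) * t ^ 2) := by
    intro t; ring_nf
  simp_rw [h]
  rw [integral_gaussian]
  have h2 : (Real.pi / (1/2 : ℝ)) = 2 * Real.pi := by ring
  rw [h2]
  rw [one_div, inv_mul_cancel₀]
  positivity

lemma cdf_eq (x : ℝ) : stdNormalCDF x = ∫ t in Set.Iic x, gauss t := rfl

lemma cdf_mono : Monotone stdNormalCDF := by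
  intro x y hxy
  rw [cdf_eq, cdf_eq]
  refine MeasureTheory.setIntegral_mono_set gauss_integrable.integrableOn ?_ ?_
  · filter_upwards with t using gauss_nonneg t
  · exact Filter.Eventually.of_forall (Set.Iic_subset_Iic.mpr hxy)

lemma cdf_neg (x : ℝ) : stdNormalCDF (-x) = 1 - stdNormalCDF x := by
  have heven : ∀ t : ℝ, gauss (-t) = gauss t := by
    intro t; unfold gauss; ring_nf
  have h1 : stdNormalCDF (-x) = ∫ t in Set.Ioi x, gauss t := by
    rw [cdf_eq]
    have := integral_comp_neg_Iic (-x) gauss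
    simp only [neg_neg] at this
    rw [← this]
    simp_rw [heven]
  have h2 : (∫ t in Set.Iic x, gauss t) + (∫ t in Set.Ioi x, gauss t) = 1 := by
    rw [intervalIntegral.integral_Iic_add_Ioi gauss_integrable.integrableOn
      gauss_integrable.integrableOn, gauss_total]
  rw [h1, cdf_eq]
  linarith

lemma cdf_sub_eq (x y : ℝ) :
    stdNormalCDF y - stdNormalCDF x = ∫ t in x..y, gauss t := by
  rw [cdf_eq, cdf_eq]
  exact intervalIntegral.integral_Iic_sub_Iic gauss_integrable.integrableOn
    gauss_integrable.integrableOn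

lemma gauss_pt {c ε t : ℝ} (hc : 0 < c) (hε : 0 ≤ ε) (ht : t ≤ c / 2 - ε / c) :
    Real.exp ε * gauss (t - c) ≤ gauss t := by
  have h1 : t * c ≤ (c / 2 - ε / c) * c := mul_le_mul_of_nonneg_right ht hc.le
  have h2 : (c / 2 - ε / c) * c = c ^ 2 / 2 - ε := by field_simp
  have h3 : ε + (-((t - c) ^ 2) / 2) ≤ -(t ^ 2) / 2 := by nlinarith
  unfold gauss
  have h4 : Real.exp ε * ((1 / Real.sqrt (2 * Real.pi)) * Real.exp (-((t - c) ^ 2) / 2))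
      = (1 / Real.sqrt (2 * Real.pi)) * Real.exp (ε + (-((t - c) ^ 2) / 2)) := by
    rw [Real.exp_add]; ring
  rw [h4]
  have h5 : Real.exp (ε + (-((t - c) ^ 2) / 2)) ≤ Real.exp (-(t ^ 2) / 2) :=
    Real.exp_le_exp.mpr h3
  have hpos : (0 : ℝ) ≤ 1 / Real.sqrt (2 * Real.pi) := by positivity
  exact mul_le_mul_of_nonneg_left h5 hpos

lemma key {c ε : ℝ} (hc : 0 < c) (hε : 0 ≤ ε) (x : ℝ) :
    stdNormalCDF x - Real.exp ε * stdNormalCDF (x - c) ≤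
      stdNormalCDF (c / 2 - ε / c) - Real.exp ε * stdNormalCDF (c / 2 - ε / c - c) := by
  set x' : ℝ := c / 2 - ε / c with hx'
  have hint : ∀ u v : ℝ, IntervalIntegrable gauss MeasureTheory.volume u v :=
    fun u v => gauss_integrable.intervalIntegrable
  have hint2 : ∀ u v : ℝ, IntervalIntegrable (fun t => Real.exp ε * gauss (t - c))
      MeasureTheory.volume u v := by
    intro u v
    exact (((gauss_integrable.comp_sub_right c).const_mul (Real.exp ε)).intervalIntegrable)
  have hshift : stdNormalCDF (x' - c) - stdNormalCDF (x - c)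
      = ∫ t in x..x', gauss (t - c) := by
    rw [cdf_sub_eq, intervalIntegral.integral_comp_sub_right gauss c]
  have hmain : (stdNormalCDF x' - Real.exp ε * stdNormalCDF (x' - c))
      - (stdNormalCDF x - Real.exp ε * stdNormalCDF (x - c))
      = ∫ t in x..x', (gauss t - Real.exp ε * gauss (t - c)) := by
    rw [intervalIntegral.integral_sub (hint x x') (hint2 x x')]
    rw [intervalIntegral.integral_const_mul, ← hshift, ← cdf_sub_eq]
    ring
  have hnn : 0 ≤ ∫ t in x..x', (gauss t - Real.exp ε * gauss (t - c)) := by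
    rcases le_total x x' with h | h
    · apply intervalIntegral.integral_nonneg h
      intro t ht
      have : t ≤ x' := ht.2
      linarith [gauss_pt hc hε this]
    · have hneg : 0 ≤ ∫ t in x'..x, (Real.exp ε * gauss (t - c) - gauss t) := by
        apply intervalIntegral.integral_nonneg h
        intro t ht
        have htx : x' ≤ t := ht.1
        have h1 : (c / 2 - ε / c) * c ≤ t * c := mul_le_mul_of_nonneg_right htx hc.le
        have h2 : (c / 2 - ε / c) * c = c ^ 2 / 2 - ε := by field_simp
        have h3 : -(t ^ 2) / 2 ≤ ε + (-((t - c) ^ 2) / 2) := by nlinarith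
        have h4 : Real.exp ε * gauss (t - c)
            = (1 / Real.sqrt (2 * Real.pi)) * Real.exp (ε + (-((t - c) ^ 2) / 2)) := by
          unfold gauss; rw [Real.exp_add]; ring
        have h5 : gauss t ≤ Real.exp ε * gauss (t - c) := by
          rw [h4]
          unfold gauss
          have hpos : (0 : ℝ) ≤ 1 / Real.sqrt (2 * Real.pi) := by positivity
          exact mul_le_mul_of_nonneg_left (Real.exp_le_exp.mpr h3) hpos
        linarith
      have heq : (∫ t in x'..x, (Real.exp ε * gauss (t - c) - gauss t))
          = -∫ t in x'..x, (gauss t - Real.exp ε * gauss (t - c)) := by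
        rw [← intervalIntegral.integral_neg]
        congr 1
        funext t
        ring
      rw [heq] at hneg
      rw [intervalIntegral.integral_symm]
      linarith
  linarith [hmain, hnn]

end DpsignAux

/-- Under the analytic-Gaussian condition, the probability that the dpsign compressor
outputs `−1` satisfies the `(ε, δ)`-DP inequality. -/
theorem dpsign_minus_one_dp
    (Δ σ ε δ : ℝ) (hΔ : 0 < Δ) (hσ : 0 < σ) (hε : 0 ≤ ε) (hδ : δ ∈ Set.Ioo (0 : ℝ) 1)
    (hAG : stdNormalCDF (Δ / (2 * σ) - ε * σ / Δ)
        - Real.exp ε * stdNormalCDF (-(Δ / (2 * σ)) - ε * σ / Δ) ≤ δ) :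
    ∀ a b : ℝ, |a - b| ≤ Δ →
      1 - stdNormalCDF (a / σ) ≤ Real.exp ε * (1 - stdNormalCDF (b / σ)) + δ := by
  intro a b hab
  set c : ℝ := Δ / σ with hc
  have hcpos : 0 < c := div_pos hΔ hσ
  have hx1 : c / 2 - ε / c = Δ / (2 * σ) - ε * σ / Δ := by
    rw [hc]; field_simp
  have hx2 : c / 2 - ε / c - c = -(Δ / (2 * σ)) - ε * σ / Δ := by
    rw [hc]; field_simp; ring
  have hkey := DpsignAux.key hcpos hε (-a / σ)
  rw [hx2, hx1] at hkey
  have hkey2 : stdNormalCDF (-a / σ) - Real.exp ε * stdNormalCDF (-a / σ - c) ≤ δ :=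
    le_trans hkey hAG
  -- -a/σ - c ≤ -b/σ
  have hmono : stdNormalCDF (-a / σ - c) ≤ stdNormalCDF (-b / σ) := by
    apply DpsignAux.cdf_mono
    have h1 : b - a ≤ Δ := by
      have := abs_le.mp hab
      linarith [this.2]
    rw [hc]
    rw [div_sub_div_same, div_le_div_iff₀ hσ hσ]
    nlinarith
  have h1 : stdNormalCDF (-(a / σ)) = 1 - stdNormalCDF (a / σ) := DpsignAux.cdf_neg _
  have h2 : stdNormalCDF (-(b / σ)) = 1 - stdNormalCDF (b / σ) := DpsignAux.cdf_neg _
  have hna : -a / σ = -(a / σ) := by ring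
  have hnb : -b / σ = -(b / σ) := by ring
  rw [hna, h1] at hkey2
  rw [hna] at hmono
  rw [hnb, h2] at hmono
  have hexp : 0 < Real.exp ε := Real.exp_pos ε
  nlinarith [hmono, hkey2]
end

section
/- Let d ≥ 1, Δ > 0, σ > 0, ε ≥ 0 and δ ∈ (0,1) satisfy the analytic-Gaussian condition Φ(Δ/(2σ) − εσ/Δ) − e^ε·Φ(−Δ/(2σ) − εσ/Δ) ≤ δ. Then for all vectors a, b ∈ ℝ^d with ‖a − b‖₂ ≤ Δ and every sign vector v ∈ {−1, 1}^d, the pointwise output probabilities of the coordinate-wise dpsign compressor satisfy ∏_{i=1}^d p(a_i, v_i) ≤ e^ε · ∏_{i=1}^d p(b_i, v_i) + δ, where p(g, 1) = Φ(g/σ) and p(g, −1) = 1 − Φ(g/σ). -/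
open Real

open MeasureTheory Set

namespace DPAux

noncomputable def phi (x : ℝ) : ℝ := (1 / Real.sqrt (2 * Real.pi)) * Real.exp (-(x ^ 2) / 2)

lemma sqrt2pi_pos : 0 < Real.sqrt (2 * Real.pi) := Real.sqrt_pos.2 (by positivity)

lemma phi_pos (x : ℝ) : 0 < phi x := by
  unfold phi; positivity

lemma phi_nonneg (x : ℝ) : 0 ≤ phi x := (phi_pos x).le

lemma phi_eq (x : ℝ) : phi x = (1 / Real.sqrt (2 * Real.pi)) * Real.exp (-(1/2) * x ^ 2) := by
  unfold phi; ring_nf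

lemma continuous_phi : Continuous phi := by
  unfold phi; fun_prop

lemma integrable_phi : Integrable phi := by
  have h : Integrable (fun x : ℝ => Real.exp (-(1/2 : ℝ) * x ^ 2)) :=
    integrable_exp_neg_mul_sq (by norm_num)
  exact (h.const_mul (1 / Real.sqrt (2 * Real.pi))).congr
    (Filter.Eventually.of_forall fun x => (phi_eq x).symm)

lemma integral_phi : ∫ x, phi x = 1 := by
  have h : ∫ x : ℝ, Real.exp (-(1/2 : ℝ) * x ^ 2) = Real.sqrt (π / (1/2)) :=
    integral_gaussian (1/2)
  have h2 : Real.sqrt (π / (1/2)) = Real.sqrt (2 * π) := by norm_num [mul_comm]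
  calc ∫ x, phi x = (1 / Real.sqrt (2 * Real.pi)) * ∫ x : ℝ, Real.exp (-(1/2 : ℝ) * x ^ 2) := by
        rw [← integral_const_mul]; exact integral_congr_ae (Filter.Eventually.of_forall fun x => phi_eq x)
    _ = 1 := by rw [h, h2]; field_simp

lemma phi_even (x : ℝ) : phi (-x) = phi x := by unfold phi; ring_nf

lemma stdNormalCDF_eq (x : ℝ) : stdNormalCDF x = ∫ t in Iic x, phi t := rfl

lemma stdNormalCDF_nonneg (x : ℝ) : 0 ≤ stdNormalCDF x :=
  setIntegral_nonneg measurableSet_Iic (fun t _ => phi_nonneg t)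

lemma integral_Ioi_phi (c : ℝ) : ∫ x in Ioi c, phi x = 1 - stdNormalCDF c := by
  have h := integral_add_compl (measurableSet_Iic (a := c)) integrable_phi
  rw [compl_Iic] at h
  rw [stdNormalCDF_eq, ← integral_phi]; linarith [h]

lemma stdNormalCDF_le_one (x : ℝ) : stdNormalCDF x ≤ 1 := by
  have := setIntegral_nonneg (μ := volume) measurableSet_Ioi (fun t (_ : t ∈ Ioi x) => phi_nonneg t)
  rw [integral_Ioi_phi] at this; linarith

lemma stdNormalCDF_neg (x : ℝ) : stdNormalCDF (-x) = 1 - stdNormalCDF x := by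
  rw [stdNormalCDF_eq]
  have h1 : ∫ t in Iic (-x), phi t = ∫ t in Iic (-x), phi (-t) :=
    integral_congr_ae (Filter.Eventually.of_forall fun t => (phi_even t).symm)
  rw [h1, integral_comp_neg_Iic, neg_neg, integral_Ioi_phi]

lemma hasDerivAt_stdNormalCDF (x : ℝ) : HasDerivAt stdNormalCDF (phi x) x := by
  have hfun : stdNormalCDF = fun y => stdNormalCDF 0 + ∫ t in (0:ℝ)..y, phi t := by
    funext y
    have := intervalIntegral.integral_Iic_sub_Iic (integrable_phi.integrableOn) (integrable_phi.integrableOn)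
      (a := (0:ℝ)) (b := y)
    rw [stdNormalCDF_eq, stdNormalCDF_eq]; linarith
  rw [hfun]
  have : HasDerivAt (fun y => ∫ t in (0:ℝ)..y, phi t) (phi x) x := by
    refine intervalIntegral.integral_hasDerivAt_right (integrable_phi.intervalIntegrable)
      ?_ continuous_phi.continuousAt
    exact continuous_phi.stronglyMeasurable.stronglyMeasurableAtFilter
  simpa using this.const_add (stdNormalCDF 0)

lemma stdNormalCDF_mono : Monotone stdNormalCDF := by
  intro a b hab
  rw [stdNormalCDF_eq, stdNormalCDF_eq]
  apply setIntegral_mono_set integrable_phi.integrableOn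
    (Filter.Eventually.of_forall fun t => phi_nonneg t)
    (HasSubset.Subset.eventuallyLE (Iic_subset_Iic.2 hab))

lemma exp_mul_phi (ε : ℝ) {s : ℝ} (hs : s ≠ 0) :
    Real.exp ε * phi (-(s/2) - ε/s) = phi (s/2 - ε/s) := by
  rw [show -(s/2) - ε/s = -(s/2 + ε/s) by ring, phi_even]
  unfold phi
  rw [mul_comm (Real.exp ε), mul_assoc, ← Real.exp_add]
  congr 2
  field_simp
  ring

lemma hasDerivAt_h (ε : ℝ) {s : ℝ} (hs : 0 < s) :
    HasDerivAt (fun s => stdNormalCDF (s/2 - ε/s) - Real.exp ε * stdNormalCDF (-(s/2) - ε/s))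
      (phi (s/2 - ε/s)) s := by
  have hs' : s ≠ 0 := hs.ne'
  have hinv : HasDerivAt (fun s : ℝ => ε / s) (-(ε / s^2)) s := by
    have := (hasDerivAt_inv hs').const_mul ε
    simpa [div_eq_mul_inv, neg_div, mul_comm] using this
  have h1 : HasDerivAt (fun s : ℝ => s/2 - ε/s) (1/2 + ε/s^2) s := by
    have := ((hasDerivAt_id s).div_const 2).sub hinv
    exact this.congr_deriv (by ring)
  have h2 : HasDerivAt (fun s : ℝ => -(s/2) - ε/s) (-(1/2) + ε/s^2) s := by
    have := (((hasDerivAt_id s).div_const 2).neg).sub hinv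
    exact this.congr_deriv (by ring)
  have c1 := (hasDerivAt_stdNormalCDF (s/2 - ε/s)).comp s h1
  have c2 := ((hasDerivAt_stdNormalCDF (-(s/2) - ε/s)).comp s h2).const_mul (Real.exp ε)
  have := c1.sub c2
  refine this.congr_deriv ?_
  have key := exp_mul_phi ε hs'
  rw [show Real.exp ε * (phi (-(s/2) - ε/s) * (-(1/2) + ε/s^2))
      = (Real.exp ε * phi (-(s/2) - ε/s)) * (-(1/2) + ε/s^2) by ring, key]
  ring

lemma h_mono (ε : ℝ) {s t : ℝ} (hs : 0 < s) (hst : s ≤ t) :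
    stdNormalCDF (s/2 - ε/s) - Real.exp ε * stdNormalCDF (-(s/2) - ε/s)
      ≤ stdNormalCDF (t/2 - ε/t) - Real.exp ε * stdNormalCDF (-(t/2) - ε/t) := by
  rcases eq_or_lt_of_le hst with rfl | hlt
  · exact le_refl _
  have hmono : StrictMonoOn
      (fun s => stdNormalCDF (s/2 - ε/s) - Real.exp ε * stdNormalCDF (-(s/2) - ε/s))
      (Ioi (0:ℝ)) := by
    apply strictMonoOn_of_deriv_pos (convex_Ioi 0)
    · intro x hx
      exact ((hasDerivAt_h ε hx).differentiableAt.continuousAt).continuousWithinAt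
    · intro x hx
      rw [interior_Ioi] at hx
      rw [(hasDerivAt_h ε hx).deriv]
      exact phi_pos _
  exact (hmono hs (lt_trans hs hlt) hlt).le

lemma prod_phi_norm {d : ℕ} (x : EuclideanSpace ℝ (Fin d)) :
    ∏ i, phi (x i) = (1 / Real.sqrt (2 * Real.pi))^d * Real.exp (-(‖x‖^2)/2) := by
  have hn : ‖x‖^2 = ∑ i, (x i)^2 := by
    rw [EuclideanSpace.norm_eq, Real.sq_sqrt (by positivity)]
    simp [sq_abs]
  unfold phi
  rw [Finset.prod_mul_distrib, Finset.prod_const, Finset.card_univ, Fintype.card_fin,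
    ← Real.exp_sum, hn]
  congr 1
  rw [← Finset.sum_div, Finset.sum_neg_distrib]

open RealInnerProductSpace in
lemma halfspace {d : ℕ} (w : Fin d → ℝ) (hw : w ≠ 0) (t : ℝ) :
    ∫ y : Fin d → ℝ, Set.indicator {y : Fin d → ℝ | t < ∑ i, w i * y i}
      (fun y => ∏ i, phi (y i)) y
    = 1 - stdNormalCDF (t / Real.sqrt (∑ i, (w i)^2)) := by
  classical
  set wE : EuclideanSpace ℝ (Fin d) := (WithLp.equiv 2 (Fin d → ℝ)).symm w with hwEdef
  have hwE_apply : ∀ i, wE i = w i := fun i => rfl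
  have hwE : wE ≠ 0 := by
    intro h; apply hw
    funext i; rw [← hwE_apply i, h]; simp
  have hnval : ‖wE‖ = Real.sqrt (∑ i, (w i)^2) := by
    rw [EuclideanSpace.norm_eq]
    congr 1
    exact Finset.sum_congr rfl fun i _ => by rw [hwE_apply, Real.norm_eq_abs, sq_abs]
  have hnpos : (0:ℝ) < ‖wE‖ := norm_pos_iff.2 hwE
  obtain ⟨i₀, hi₀⟩ := Function.ne_iff.1 hw
  set u : EuclideanSpace ℝ (Fin d) := ‖wE‖ • EuclideanSpace.single i₀ (1:ℝ) with hudef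
  have hu : ‖u‖ = ‖wE‖ := by
    rw [hudef, norm_smul, EuclideanSpace.norm_single]
    simp [abs_of_pos hnpos]
  obtain ⟨R, hR⟩ : ∃ R : EuclideanSpace ℝ (Fin d) ≃ₗᵢ[ℝ] EuclideanSpace ℝ (Fin d),
      R u = wE := by
    by_cases h : u = wE
    · exact ⟨LinearIsometryEquiv.refl ℝ _, by simp [h]⟩
    · exact ⟨Submodule.reflection (ℝ ∙ (u - wE))ᗮ, Submodule.reflection_sub hu⟩
  have hinner : ∀ x : EuclideanSpace ℝ (Fin d), ⟪wE, x⟫ = ∑ i, w i * x i := by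
    intro x
    rw [PiLp.inner_apply]
    exact Finset.sum_congr rfl fun i _ => by
      rw [RCLike.inner_apply, hwE_apply]; simp; ring
  have hinnerR : ∀ x : EuclideanSpace ℝ (Fin d), ⟪wE, R x⟫ = ‖wE‖ * x i₀ := by
    intro x
    have h1 : ⟪wE, R x⟫ = ⟪R u, R x⟫ := by rw [hR]
    rw [h1, LinearIsometryEquiv.inner_map_map, hudef, real_inner_smul_left,
      EuclideanSpace.inner_single_left]
    simp
  have e_pres := EuclideanSpace.volume_preserving_symm_measurableEquiv_toLp (Fin d)
  have step1 : ∫ y : Fin d → ℝ, Set.indicator {y : Fin d → ℝ | t < ∑ i, w i * y i}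
        (fun y => ∏ i, phi (y i)) y
      = ∫ x : EuclideanSpace ℝ (Fin d),
          Set.indicator {x : EuclideanSpace ℝ (Fin d) | t < ⟪wE, x⟫}
            (fun x => ∏ i, phi (x i)) x := by
    rw [← e_pres.integral_comp']
    apply integral_congr_ae
    filter_upwards with x
    have hcoord : ∀ i, (MeasurableEquiv.toLp 2 (Fin d → ℝ)).symm x i = x i := fun i => rfl
    simp only [Set.indicator_apply, Set.mem_setOf_eq, hcoord, hinner]
  have step2 : ∫ x : EuclideanSpace ℝ (Fin d),
        Set.indicator {x : EuclideanSpace ℝ (Fin d) | t < ⟪wE, x⟫}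
          (fun x => ∏ i, phi (x i)) x
      = ∫ x : EuclideanSpace ℝ (Fin d),
          Set.indicator {x : EuclideanSpace ℝ (Fin d) | t < ‖wE‖ * x i₀}
            (fun x => ∏ i, phi (x i)) x := by
    rw [← R.measurePreserving.integral_comp R.toHomeomorph.measurableEmbedding]
    apply integral_congr_ae
    filter_upwards with x
    have hprod : ∏ i, phi ((R x) i) = ∏ i, phi (x i) := by
      rw [prod_phi_norm, prod_phi_norm, R.norm_map]
    simp only [Set.indicator_apply, Set.mem_setOf_eq, hinnerR, hprod]
  set f : Fin d → ℝ → ℝ :=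
    fun i => if i = i₀ then Set.indicator (Ioi (t / ‖wE‖)) phi else phi with hfdef
  have step3 : ∫ x : EuclideanSpace ℝ (Fin d),
        Set.indicator {x : EuclideanSpace ℝ (Fin d) | t < ‖wE‖ * x i₀}
          (fun x => ∏ i, phi (x i)) x
      = ∫ y : Fin d → ℝ, ∏ i, f i (y i) := by
    rw [← e_pres.integral_comp']
    apply integral_congr_ae
    filter_upwards with x
    have hcoord : ∀ i, (MeasurableEquiv.toLp 2 (Fin d → ℝ)).symm x i = x i := fun i => rfl
    simp only [hcoord]
    by_cases hc : t < ‖wE‖ * x i₀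
    · rw [Set.indicator_of_mem (show x ∈ {x : EuclideanSpace ℝ (Fin d) | t < ‖wE‖ * x i₀} from hc)]
      refine (Finset.prod_congr rfl fun i _ => ?_).symm
      rw [hfdef]
      by_cases h : i = i₀
      · subst h
        simp only [if_pos rfl]
        exact Set.indicator_of_mem ((div_lt_iff₀' hnpos).2 hc) phi
      · simp only [if_neg h]
    · rw [Set.indicator_of_notMem (show x ∉ {x : EuclideanSpace ℝ (Fin d) | t < ‖wE‖ * x i₀} from hc)]
      refine (Finset.prod_eq_zero (Finset.mem_univ i₀) ?_).symm
      rw [hfdef]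
      simp only [if_pos rfl]
      exact Set.indicator_of_notMem (fun h => hc ((div_lt_iff₀' hnpos).1 h)) phi
  have step4 : ∫ y : Fin d → ℝ, ∏ i, f i (y i) = 1 - stdNormalCDF (t / ‖wE‖) := by
    rw [MeasureTheory.integral_fintype_prod_volume_eq_prod (ι := Fin d) f]
    have key : ∀ i, ∫ x, f i x = if i = i₀ then 1 - stdNormalCDF (t / ‖wE‖) else 1 := by
      intro i
      rw [hfdef]
      by_cases h : i = i₀
      · simp only [if_pos h]
        rw [MeasureTheory.integral_indicator measurableSet_Ioi, integral_Ioi_phi]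
      · simp only [if_neg h]
        exact integral_phi
    rw [Finset.prod_congr rfl fun i _ => key i, Finset.prod_ite_eq' Finset.univ i₀
      (fun _ => 1 - stdNormalCDF (t / ‖wE‖))]
    simp
  rw [step1, step2, step3, step4, hnval]

lemma integral_Ici_phi_sub (a : ℝ) : ∫ s in Ici (0:ℝ), phi (s - a) = stdNormalCDF a := by
  have h0 : ∫ s in Ici (0:ℝ), phi (s - a) = ∫ s in Ioi (0:ℝ), (fun t => phi (a + t)) (-s) := by
    rw [integral_Ici_eq_integral_Ioi]
    exact setIntegral_congr_ae measurableSet_Ioi (Filter.Eventually.of_forall fun s _ => by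
      rw [show phi (s - a) = phi (-(s-a)) from (phi_even _).symm]; ring_nf)
  have hneg := integral_comp_neg_Ioi (0:ℝ) (fun t => phi (a + t))
  rw [neg_zero] at hneg
  rw [h0, hneg]
  have h1 := (measurePreserving_add_right volume a).setIntegral_preimage_emb
    (Homeomorph.addRight a).measurableEmbedding phi (Iic a)
  have h2 : (fun x : ℝ => x + a) ⁻¹' (Iic a) = Iic (0:ℝ) := by
    rw [preimage_add_const_Iic]; simp
  rw [h2] at h1
  rw [stdNormalCDF_eq, ← h1]
  exact setIntegral_congr_ae measurableSet_Iic (Filter.Eventually.of_forall fun s _ => by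
    simp [add_comm])

lemma integrable_prod_phi_sub {d : ℕ} (α : Fin d → ℝ) :
    Integrable (fun x : Fin d → ℝ => ∏ i, phi (x i - α i)) :=
  Integrable.fintype_prod (f := fun i s => phi (s - α i))
    (fun i => integrable_phi.comp_sub_right (α i))

lemma orthant {d : ℕ} (α : Fin d → ℝ) :
    ∫ x : Fin d → ℝ, Set.indicator {x : Fin d → ℝ | ∀ i, 0 ≤ x i}
      (fun x => ∏ i, phi (x i - α i)) x = ∏ i, stdNormalCDF (α i) := by
  have hpt : ∀ x : Fin d → ℝ, Set.indicator {x : Fin d → ℝ | ∀ i, 0 ≤ x i}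
      (fun x => ∏ i, phi (x i - α i)) x
      = ∏ i, Set.indicator (Ici (0:ℝ)) (fun s => phi (s - α i)) (x i) := by
    intro x
    by_cases h : ∀ i, 0 ≤ x i
    · rw [Set.indicator_of_mem (show x ∈ {x : Fin d → ℝ | ∀ i, 0 ≤ x i} from h)]
      exact Finset.prod_congr rfl fun i _ => (Set.indicator_of_mem (show x i ∈ Ici (0:ℝ) from h i) (fun s => phi (s - α i))).symm
    · rw [Set.indicator_of_notMem (show x ∉ {x : Fin d → ℝ | ∀ i, 0 ≤ x i} from h)]
      push_neg at h; obtain ⟨i, hi⟩ := h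
      exact (Finset.prod_eq_zero (Finset.mem_univ i)
        (Set.indicator_of_notMem (show x i ∉ Ici (0:ℝ) from not_le.2 hi) (fun s => phi (s - α i)))).symm
  rw [integral_congr_ae (Filter.Eventually.of_forall hpt),
    MeasureTheory.integral_fintype_prod_volume_eq_prod (ι := Fin d)
      (fun i => Set.indicator (Ici (0:ℝ)) (fun s => phi (s - α i)))]
  exact Finset.prod_congr rfl fun i _ => by
    rw [MeasureTheory.integral_indicator measurableSet_Ici, integral_Ici_phi_sub]

lemma prod_phi_sub_eq {d : ℕ} (α x : Fin d → ℝ) :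
    ∏ i, phi (x i - α i)
      = (1 / Real.sqrt (2 * Real.pi))^d * Real.exp (∑ i, -((x i - α i) ^ 2) / 2) := by
  unfold phi
  rw [Finset.prod_mul_distrib, Finset.prod_const, Finset.card_univ, Fintype.card_fin,
    ← Real.exp_sum]

lemma compare_densities {d : ℕ} (α β x : Fin d → ℝ) (ε : ℝ) :
    (ε + ((∑ i, (α i)^2) - ∑ i, (β i)^2)/2 < ∑ i, (α i - β i) * x i)
      ↔ Real.exp ε * ∏ i, phi (x i - β i) < ∏ i, phi (x i - α i) := by
  rw [prod_phi_sub_eq, prod_phi_sub_eq]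
  have hCpos : 0 < (1 / Real.sqrt (2 * Real.pi))^d := by positivity
  have hdiff : (∑ i, -((x i - α i) ^ 2) / 2) - (∑ i, -((x i - β i) ^ 2) / 2)
      = (∑ i, (α i - β i) * x i) - ((∑ i, (α i)^2) - ∑ i, (β i)^2)/2 := by
    rw [← Finset.sum_sub_distrib,
      Finset.sum_congr rfl (fun i (_ : i ∈ Finset.univ) =>
        show -((x i - α i) ^ 2) / 2 - -((x i - β i) ^ 2) / 2
          = (α i - β i) * x i - ((α i)^2 - (β i)^2)/2 by ring),
      Finset.sum_sub_distrib]
    congr 1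
    rw [← Finset.sum_div, Finset.sum_sub_distrib]
  rw [show Real.exp ε * ((1 / Real.sqrt (2 * Real.pi))^d * Real.exp (∑ i, -((x i - β i) ^ 2) / 2))
      = (1 / Real.sqrt (2 * Real.pi))^d * Real.exp (ε + ∑ i, -((x i - β i) ^ 2) / 2) by
        rw [Real.exp_add]; ring,
    mul_lt_mul_iff_right₀ hCpos, Real.exp_lt_exp]
  constructor <;> intro h <;> linarith

lemma shift_halfspace {d : ℕ} (w α : Fin d → ℝ) (c : ℝ) :
    ∫ x : Fin d → ℝ, Set.indicator {x : Fin d → ℝ | c < ∑ i, w i * x i}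
        (fun x => ∏ i, phi (x i - α i)) x
    = ∫ y : Fin d → ℝ, Set.indicator {y : Fin d → ℝ | c - ∑ i, w i * α i < ∑ i, w i * y i}
        (fun y => ∏ i, phi (y i)) y := by
  rw [← integral_add_right_eq_self (fun x : Fin d → ℝ =>
    Set.indicator {x : Fin d → ℝ | c < ∑ i, w i * x i} (fun x => ∏ i, phi (x i - α i)) x) α]
  apply integral_congr_ae
  filter_upwards with x
  have hsum : ∑ i, w i * (x + α) i = ∑ i, w i * x i + ∑ i, w i * α i := by
    rw [← Finset.sum_add_distrib]
    exact Finset.sum_congr rfl fun i _ => by simp only [Pi.add_apply]; ring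
  have hcond : ((x + α) ∈ {x : Fin d → ℝ | c < ∑ i, w i * x i})
      ↔ (c - ∑ i, w i * α i < ∑ i, w i * x i) := by
    simp only [Set.mem_setOf_eq, hsum]
    constructor <;> intro <;> linarith
  have hval : ∏ i, phi ((x + α) i - α i) = ∏ i, phi (x i) :=
    Finset.prod_congr rfl fun i _ => by simp only [Pi.add_apply, add_sub_cancel_right]
  rw [Set.indicator_apply, Set.indicator_apply]
  exact if_congr hcond hval rfl

theorem key {d : ℕ} (ε δ η₀ : ℝ) (hε : 0 ≤ ε) (hδ : 0 ≤ δ) (hη₀ : 0 < η₀)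
    (hAG : stdNormalCDF (η₀/2 - ε/η₀) - Real.exp ε * stdNormalCDF (-(η₀/2) - ε/η₀) ≤ δ)
    (α β : Fin d → ℝ) (hdist : Real.sqrt (∑ i, (α i - β i)^2) ≤ η₀) :
    ∏ i, stdNormalCDF (α i) ≤ Real.exp ε * ∏ i, stdNormalCDF (β i) + δ := by
  classical
  by_cases hab : α = β
  · subst hab
    have h1 : 0 ≤ ∏ i, stdNormalCDF (α i) :=
      Finset.prod_nonneg fun i _ => stdNormalCDF_nonneg _
    nlinarith [Real.one_le_exp hε]
  · set w : Fin d → ℝ := fun i => α i - β i with hwdef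
    have hw : w ≠ 0 := by
      intro h; apply hab; funext i
      have := congrFun h i
      simp only [hwdef, Pi.zero_apply] at this
      linarith
    obtain ⟨i₀, hi₀⟩ := Function.ne_iff.1 hw
    have hi₀' : w i₀ ≠ 0 := by simpa using hi₀
    have hSpos : 0 < ∑ i, (w i)^2 :=
      Finset.sum_pos' (fun i _ => sq_nonneg _) ⟨i₀, Finset.mem_univ _, by positivity⟩
    set η := Real.sqrt (∑ i, (w i)^2) with hηdef
    have hηpos : 0 < η := Real.sqrt_pos.2 hSpos
    have hηsq : η^2 = ∑ i, (w i)^2 := Real.sq_sqrt hSpos.le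
    have hηle : η ≤ η₀ := by
      rw [hηdef]
      have : ∑ i, (w i)^2 = ∑ i, (α i - β i)^2 :=
        Finset.sum_congr rfl fun i _ => by simp only [hwdef]
      rw [this]; exact hdist
    set c : ℝ := ε + ((∑ i, (α i)^2) - ∑ i, (β i)^2)/2 with hcdef
    -- measurability
    have hQm : MeasurableSet {x : Fin d → ℝ | ∀ i, 0 ≤ x i} := by
      have : {x : Fin d → ℝ | ∀ i, 0 ≤ x i}
          = ⋂ i, (fun x : Fin d → ℝ => x i) ⁻¹' (Ici 0) := by
        ext x; simp [Set.mem_iInter]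
      rw [this]
      exact MeasurableSet.iInter fun i => (measurable_pi_apply i) measurableSet_Ici
    have hLm : MeasurableSet {x : Fin d → ℝ | c < ∑ i, w i * x i} := by
      apply measurableSet_lt measurable_const
      exact Finset.measurable_sum _ fun i _ => by fun_prop
    have hIα := integrable_prod_phi_sub α
    have hIβ := integrable_prod_phi_sub β
    -- comparison step
    have hcomp : (∫ x : Fin d → ℝ, Set.indicator {x : Fin d → ℝ | ∀ i, 0 ≤ x i}
          (fun x => ∏ i, phi (x i - α i)) x)
        - Real.exp ε * ∫ x : Fin d → ℝ, Set.indicator {x : Fin d → ℝ | ∀ i, 0 ≤ x i}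
          (fun x => ∏ i, phi (x i - β i)) x
        ≤ (∫ x : Fin d → ℝ, Set.indicator {x : Fin d → ℝ | c < ∑ i, w i * x i}
          (fun x => ∏ i, phi (x i - α i)) x)
        - Real.exp ε * ∫ x : Fin d → ℝ, Set.indicator {x : Fin d → ℝ | c < ∑ i, w i * x i}
          (fun x => ∏ i, phi (x i - β i)) x := by
      have hint1 := hIα.indicator hQm
      have hint2 := hIβ.indicator hQm
      have hint3 := hIα.indicator hLm
      have hint4 := hIβ.indicator hLm
      have hpt : ∀ x : Fin d → ℝ,
          Set.indicator {x : Fin d → ℝ | ∀ i, 0 ≤ x i} (fun x => ∏ i, phi (x i - α i)) x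
            - Real.exp ε * Set.indicator {x : Fin d → ℝ | ∀ i, 0 ≤ x i}
                (fun x => ∏ i, phi (x i - β i)) x
          ≤ Set.indicator {x : Fin d → ℝ | c < ∑ i, w i * x i}
              (fun x => ∏ i, phi (x i - α i)) x
            - Real.exp ε * Set.indicator {x : Fin d → ℝ | c < ∑ i, w i * x i}
                (fun x => ∏ i, phi (x i - β i)) x := by
        intro x
        have hα0 : 0 ≤ ∏ i, phi (x i - α i) := Finset.prod_nonneg fun i _ => phi_nonneg _
        have hβ0 : 0 ≤ ∏ i, phi (x i - β i) := Finset.prod_nonneg fun i _ => phi_nonneg _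
        have hexp : 0 < Real.exp ε := Real.exp_pos ε
        simp only [Set.indicator_apply, Set.mem_setOf_eq]
        by_cases hxL : c < ∑ i, w i * x i
        · have hgt : Real.exp ε * ∏ i, phi (x i - β i) < ∏ i, phi (x i - α i) :=
            (compare_densities α β x ε).1 hxL
          by_cases hxQ : ∀ i, 0 ≤ x i
          · simp only [if_pos hxL, if_pos hxQ]; exact le_refl _
          · simp only [if_pos hxL, if_neg hxQ]; nlinarith
        · have hle : ∏ i, phi (x i - α i) ≤ Real.exp ε * ∏ i, phi (x i - β i) :=
            not_lt.1 fun h => hxL ((compare_densities α β x ε).2 h)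
          by_cases hxQ : ∀ i, 0 ≤ x i
          · simp only [if_neg hxL, if_pos hxQ]; linarith
          · simp only [if_neg hxL, if_neg hxQ]; simp
      calc (∫ x : Fin d → ℝ, Set.indicator {x : Fin d → ℝ | ∀ i, 0 ≤ x i}
              (fun x => ∏ i, phi (x i - α i)) x)
            - Real.exp ε * ∫ x : Fin d → ℝ, Set.indicator {x : Fin d → ℝ | ∀ i, 0 ≤ x i}
              (fun x => ∏ i, phi (x i - β i)) x
          = ∫ x : Fin d → ℝ, (Set.indicator {x : Fin d → ℝ | ∀ i, 0 ≤ x i}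
              (fun x => ∏ i, phi (x i - α i)) x
            - Real.exp ε * Set.indicator {x : Fin d → ℝ | ∀ i, 0 ≤ x i}
              (fun x => ∏ i, phi (x i - β i)) x) := by
            rw [integral_sub hint1 (hint2.const_mul (Real.exp ε)), integral_const_mul]
        _ ≤ ∫ x : Fin d → ℝ, (Set.indicator {x : Fin d → ℝ | c < ∑ i, w i * x i}
              (fun x => ∏ i, phi (x i - α i)) x
            - Real.exp ε * Set.indicator {x : Fin d → ℝ | c < ∑ i, w i * x i}
              (fun x => ∏ i, phi (x i - β i)) x) :=
            integral_mono (hint1.sub (hint2.const_mul (Real.exp ε)))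
              (hint3.sub (hint4.const_mul (Real.exp ε))) hpt
        _ = (∫ x : Fin d → ℝ, Set.indicator {x : Fin d → ℝ | c < ∑ i, w i * x i}
              (fun x => ∏ i, phi (x i - α i)) x)
            - Real.exp ε * ∫ x : Fin d → ℝ, Set.indicator {x : Fin d → ℝ | c < ∑ i, w i * x i}
              (fun x => ∏ i, phi (x i - β i)) x := by
            rw [integral_sub hint3 (hint4.const_mul (Real.exp ε)), integral_const_mul]
    -- sum identities
    have h1 : ∑ i, w i * α i = (∑ i, (α i)^2) - (∑ i, α i * β i) := by
      rw [← Finset.sum_sub_distrib]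
      exact Finset.sum_congr rfl fun i _ => by simp only [hwdef]; ring
    have h2 : ∑ i, w i * β i = (∑ i, α i * β i) - (∑ i, (β i)^2) := by
      rw [← Finset.sum_sub_distrib]
      exact Finset.sum_congr rfl fun i _ => by simp only [hwdef]; ring
    have h3 : ∑ i, (w i)^2
        = (∑ i, (α i)^2) - 2 * (∑ i, α i * β i) + (∑ i, (β i)^2) := by
      have e1 : ∑ i, (w i)^2
          = ∑ i, ((α i)^2 - 2 * (α i * β i) + (β i)^2) :=
        Finset.sum_congr rfl fun i _ => by simp only [hwdef]; ring
      rw [e1, Finset.sum_add_distrib, Finset.sum_sub_distrib, ← Finset.mul_sum]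
    -- halfspace values
    have hCα : (∫ x : Fin d → ℝ, Set.indicator {x : Fin d → ℝ | c < ∑ i, w i * x i}
          (fun x => ∏ i, phi (x i - α i)) x) = stdNormalCDF (η/2 - ε/η) := by
      rw [shift_halfspace w α c, halfspace w hw]
      have hnum : c - ∑ i, w i * α i = ε - (∑ i, (w i)^2)/2 := by
        rw [hcdef, h1]; linarith
      rw [hnum]
      have harg : -((ε - (∑ i, (w i)^2)/2) / Real.sqrt (∑ i, (w i)^2)) = η/2 - ε/η := by
        rw [← hηdef, ← hηsq]; field_simp; ring
      rw [← harg, stdNormalCDF_neg]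
    have hCβ : (∫ x : Fin d → ℝ, Set.indicator {x : Fin d → ℝ | c < ∑ i, w i * x i}
          (fun x => ∏ i, phi (x i - β i)) x) = stdNormalCDF (-(η/2) - ε/η) := by
      rw [shift_halfspace w β c, halfspace w hw]
      have hnum : c - ∑ i, w i * β i = ε + (∑ i, (w i)^2)/2 := by
        rw [hcdef, h2]; linarith
      rw [hnum]
      have harg : -((ε + (∑ i, (w i)^2)/2) / Real.sqrt (∑ i, (w i)^2)) = -(η/2) - ε/η := by
        rw [← hηdef, ← hηsq]; field_simp; ring
      rw [← harg, stdNormalCDF_neg]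
    have hm := h_mono ε hηpos hηle
    rw [← orthant α, ← orthant β]
    rw [hCα, hCβ] at hcomp
    linarith [hcomp, hAG, hm]

end DPAux

/-- Single-coordinate output probability of the dpsign compressor with noise scale `σ`:
`p σ g 1 = Φ(g/σ)` and `p σ g (−1) = 1 − Φ(g/σ)`. -/
noncomputable def dpsignProb (σ g s : ℝ) : ℝ :=
  if s = 1 then stdNormalCDF (g / σ) else 1 - stdNormalCDF (g / σ)

/-- Under the analytic-Gaussian condition, for gradients at `L₂` distance at most `Δ` and any
sign vector `v ∈ {−1,1}^d`, the pointwise output probabilities of the coordinate-wise dpsign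
compressor satisfy the `(ε, δ)`-DP inequality. -/
theorem dpsign_pointwise_dp_multidim
    (d : ℕ) (hd : 1 ≤ d) (Δ σ ε δ : ℝ) (hΔ : 0 < Δ) (hσ : 0 < σ) (hε : 0 ≤ ε)
    (hδ : δ ∈ Set.Ioo (0 : ℝ) 1)
    (hAG : stdNormalCDF (Δ / (2 * σ) - ε * σ / Δ)
        - Real.exp ε * stdNormalCDF (-(Δ / (2 * σ)) - ε * σ / Δ) ≤ δ) :
    ∀ a b : Fin d → ℝ, Real.sqrt (∑ i, (a i - b i) ^ 2) ≤ Δ →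
      ∀ v : Fin d → ℝ, (∀ i, v i = 1 ∨ v i = -1) →
        ∏ i, dpsignProb σ (a i) (v i)
          ≤ Real.exp ε * ∏ i, dpsignProb σ (b i) (v i) + δ := by
  intro a b hdist v hv
  have hσ' : σ ≠ 0 := hσ.ne'
  have hval : ∀ g : ℝ, ∀ i, dpsignProb σ g (v i) = stdNormalCDF (v i * g / σ) := by
    intro g i
    rcases hv i with h | h
    · rw [dpsignProb, if_pos h, h, one_mul]
    · rw [dpsignProb, if_neg (by rw [h]; norm_num), h,
        show (-1 : ℝ) * g / σ = -(g / σ) by ring, DPAux.stdNormalCDF_neg]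
  rw [Finset.prod_congr rfl (fun i _ => hval (a i) i),
    Finset.prod_congr rfl (fun i _ => hval (b i) i)]
  apply DPAux.key ε δ (Δ / σ) hε hδ.1.le (by positivity)
  · have e1 : (Δ / σ) / 2 = Δ / (2 * σ) := by ring
    have e2 : ε / (Δ / σ) = ε * σ / Δ := by
      field_simp
    rw [e1, e2]
    exact hAG
  · have hsum : ∑ i, (v i * a i / σ - v i * b i / σ)^2 = (∑ i, (a i - b i)^2) / σ^2 := by
      rw [Finset.sum_div]
      refine Finset.sum_congr rfl fun i _ => ?_
      have hv2 : (v i)^2 = 1 := by rcases hv i with h | h <;> rw [h] <;> norm_num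
      rw [show v i * a i / σ - v i * b i / σ = v i * (a i - b i) / σ by ring,
        div_pow, mul_pow, hv2, one_mul]
    rw [hsum, Real.sqrt_div (by positivity : (0:ℝ) ≤ ∑ i, (a i - b i)^2) (σ^2),
      Real.sqrt_sq hσ.le]
    gcongr
end
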